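/- The function x ↦ j_ν(λx, q²) is an eigenfunction of the q-Bessel operator Δ_{q,ν} with eigenvalue -λ²; that is, Δ_{q,ν}[x ↦ j_ν(λx,q²)](x) = -λ² j_ν(λx,q²) for all x ≠ 0. -/

import Mathlib

open scoped BigOperators
noncomputable section

/-- Infinite q-Pochhammer symbol `(a;q)_∞`. -/
def qPochInf (a q : ℝ) : ℝ := ∏' k : ℕ, (1 - a * q ^ k)

/-- Finite q-Pochhammer symbol `(a;q)_n`. -/
def qPochFin (a q : ℝ) (n : ℕ) : ℝ := ∏ k ∈ Finset.range n, (1 - a * q ^ k)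

/-- Normalized q-Bessel function `j_ν(x, q²)`. -/
def jnu (q ν x : ℝ) : ℝ :=
  ∑' n : ℕ, (-1 : ℝ) ^ n * q ^ (n * (n + 1)) * x ^ (2 * n) /
    (qPochFin (q ^ (2 * ν + 2)) (q ^ 2) n * qPochFin (q ^ 2) (q ^ 2) n)

/-- q-Jackson integral on `(0,∞)`. -/
def qInt (q : ℝ) (f : ℝ → ℝ) : ℝ := (1 - q) * ∑' n : ℤ, q ^ n * f (q ^ n)

/-- The constant `c_{q,ν}`. -/
def cq (q ν : ℝ) : ℝ :=
  qPochInf (q ^ (2 * ν + 2)) (q ^ 2) / ((1 - q) * qPochInf (q ^ 2) (q ^ 2))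

/-- q-Bessel Fourier transform `F_{q,ν}`. -/
def qFT (q ν : ℝ) (f : ℝ → ℝ) (x : ℝ) : ℝ :=
  cq q ν * qInt q (fun t => f t * jnu q ν (x * t) * t ^ (2 * ν + 1))

/-- Membership in `L^p_{q,ν}` (summability of the defining q-integral). -/
def qMemLp (q ν p : ℝ) (f : ℝ → ℝ) : Prop :=
  Summable (fun n : ℤ => q ^ n * |f (q ^ n)| ^ p * ((q : ℝ) ^ n) ^ (2 * ν + 1))

/-- The norm `‖f‖_{q,p,ν}`. -/
def qNorm (q ν p : ℝ) (f : ℝ → ℝ) : ℝ :=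
  (qInt q (fun x => |f x| ^ p * x ^ (2 * ν + 1))) ^ (1 / p)

/-- Inner product `⟨f,g⟩_{q,ν}`. -/
def qInner (q ν : ℝ) (f g : ℝ → ℝ) : ℝ :=
  qInt q (fun x => f x * g x * x ^ (2 * ν + 1))

/-- q-translation operator `T^ν_{q,x}`. -/
def qTrans (q ν x : ℝ) (f : ℝ → ℝ) (y : ℝ) : ℝ :=
  cq q ν * qInt q (fun t => qFT q ν f t * jnu q ν (y * t) * jnu q ν (x * t) * t ^ (2 * ν + 1))

/-- q-convolution product `f *_q g = F_{q,ν}[F_{q,ν}f × F_{q,ν}g]`. -/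
def qConv (q ν : ℝ) (f g : ℝ → ℝ) : ℝ → ℝ :=
  qFT q ν (fun t => qFT q ν f t * qFT q ν g t)

/-- q-Bessel operator `Δ_{q,ν}`. -/
def qBesselOp (q ν : ℝ) (f : ℝ → ℝ) (x : ℝ) : ℝ :=
  (f (x / q) - (1 + q ^ (2 * ν)) * f x + q ^ (2 * ν) * f (q * x)) / x ^ 2
lemma qPochFin_succ (a q : ℝ) (n : ℕ) :
    qPochFin a q (n + 1) = qPochFin a q n * (1 - a * q ^ n) :=
  Finset.prod_range_succ _ _

lemma qPochFin_pos {a q : ℝ} (ha0 : 0 ≤ a) (ha : a < 1) (hq0 : 0 ≤ q) (hq1 : q ≤ 1)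
    (n : ℕ) : 0 < qPochFin a q n := by
  refine Finset.prod_pos fun k _ => ?_
  have h1 : q ^ k ≤ 1 := pow_le_one₀ hq0 hq1
  have h2 : 0 ≤ q ^ k := pow_nonneg hq0 k
  nlinarith

def jterm (q ν y : ℝ) (n : ℕ) : ℝ :=
  (-1 : ℝ) ^ n * q ^ (n * (n + 1)) * y ^ (2 * n) /
    (qPochFin (q ^ (2 * ν + 2)) (q ^ 2) n * qPochFin (q ^ 2) (q ^ 2) n)

lemma factor_pos {q ν : ℝ} (hq : 0 < q) (hq1 : q < 1) (hν : -1 < ν) (n : ℕ) :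
    0 < 1 - q ^ (2 * ν + 2) * (q ^ 2) ^ n ∧ 0 < 1 - q ^ 2 * (q ^ 2) ^ n := by
  have hA0 : (0:ℝ) < q ^ (2 * ν + 2) := Real.rpow_pos_of_pos hq _
  have hA1 : q ^ (2 * ν + 2) < 1 := Real.rpow_lt_one hq.le hq1 (by linarith)
  have hB0 : (0:ℝ) < q ^ 2 := by positivity
  have hB1 : q ^ 2 < 1 := by nlinarith
  have h1 : (q ^ 2 : ℝ) ^ n ≤ 1 := pow_le_one₀ hB0.le hB1.le
  have h2 : (0:ℝ) ≤ (q ^ 2 : ℝ) ^ n := by positivity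
  constructor <;> nlinarith

lemma jterm_succ {q ν : ℝ} (hq : 0 < q) (hq1 : q < 1) (hν : -1 < ν) (y : ℝ) (n : ℕ) :
    jterm q ν y (n + 1) = jterm q ν y n *
      (-(q ^ (2 * n + 2)) * y ^ 2 /
        ((1 - q ^ (2 * ν + 2) * (q ^ 2) ^ n) * (1 - q ^ 2 * (q ^ 2) ^ n))) := by
  obtain ⟨hf1, hf2⟩ := factor_pos hq hq1 hν (n := n) (ν := ν)
  have hA1 : q ^ (2 * ν + 2) < 1 := Real.rpow_lt_one hq.le hq1 (by linarith)
  have hA0 : (0:ℝ) < q ^ (2 * ν + 2) := Real.rpow_pos_of_pos hq _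
  have hB1 : q ^ 2 < 1 := by nlinarith
  have hP1 : qPochFin (q ^ (2 * ν + 2)) (q ^ 2) n ≠ 0 :=
    (qPochFin_pos hA0.le hA1 (by positivity) hB1.le n).ne'
  have hP2 : qPochFin (q ^ 2) (q ^ 2) n ≠ 0 :=
    (qPochFin_pos (by positivity) hB1 (by positivity) hB1.le n).ne'
  unfold jterm
  rw [qPochFin_succ, qPochFin_succ,
    show (n+1) * (n+1+1) = n * (n+1) + (2*n+2) from by ring,
    show 2 * (n+1) = 2*n + 2 from by ring, pow_add, pow_add]
  field_simp
  ring

lemma jterm_summable {q ν : ℝ} (hq : 0 < q) (hq1 : q < 1) (hν : -1 < ν) (y : ℝ) :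
    Summable (jterm q ν y) := by
  have hA0 : (0:ℝ) < q ^ (2 * ν + 2) := Real.rpow_pos_of_pos hq _
  have hA1 : q ^ (2 * ν + 2) < 1 := Real.rpow_lt_one hq.le hq1 (by linarith)
  have hB1 : q ^ 2 < 1 := by nlinarith
  set A := q ^ (2 * ν + 2) with hA
  set D := (1 - A) * (1 - q ^ 2) with hD
  have hD0 : 0 < D := by apply mul_pos <;> linarith
  obtain ⟨N, hN⟩ := exists_pow_lt_of_lt_one
    (show (0:ℝ) < D / (2 * (y ^ 2 + 1)) by positivity) hq1
  apply summable_of_ratio_norm_eventually_le (r := 1/2) (by norm_num)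
  filter_upwards [Filter.eventually_ge_atTop N] with n hn
  obtain ⟨hf1, hf2⟩ := factor_pos hq hq1 hν (n := n) (ν := ν)
  have hq2 : q ^ (2*n+2) ≤ q ^ N :=
    pow_le_pow_of_le_one hq.le hq1.le (by omega)
  have hy : q ^ (2*n+2) * y ^ 2 ≤ D / 2 := by
    have h1 : q ^ (2*n+2) * y ^ 2 ≤ (D / (2 * (y ^ 2 + 1))) * y ^ 2 :=
      mul_le_mul_of_nonneg_right (hq2.trans hN.le) (sq_nonneg y)
    have h2 : (D / (2 * (y ^ 2 + 1))) * y ^ 2 ≤ D / 2 := by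
      rw [div_mul_eq_mul_div, div_le_div_iff₀ (by positivity) (by norm_num)]
      nlinarith
    linarith
  have hDle : D ≤ (1 - A * (q ^ 2) ^ n) * (1 - q ^ 2 * (q ^ 2) ^ n) := by
    have h1 : (q ^ 2 : ℝ) ^ n ≤ 1 := pow_le_one₀ (by positivity) hB1.le
    have h2 : (0:ℝ) ≤ (q ^ 2 : ℝ) ^ n := by positivity
    have e1 : 1 - A ≤ 1 - A * (q ^ 2) ^ n := by nlinarith
    have e2 : 1 - q ^ 2 ≤ 1 - q ^ 2 * (q ^ 2) ^ n := by nlinarith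
    exact mul_le_mul e1 e2 (by linarith) (by linarith)
  rw [jterm_succ hq hq1 hν y n, Real.norm_eq_abs, Real.norm_eq_abs, abs_mul]
  have hr : |(-(q ^ (2*n+2)) * y ^ 2 /
      ((1 - A * (q ^ 2) ^ n) * (1 - q ^ 2 * (q ^ 2) ^ n)))| ≤ 1/2 := by
    rw [abs_div, abs_mul, abs_neg,
      abs_of_nonneg (show (0:ℝ) ≤ q^(2*n+2) by positivity),
      abs_of_nonneg (sq_nonneg y), abs_of_pos (mul_pos hf1 hf2),
      div_le_iff₀ (mul_pos hf1 hf2)]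
    nlinarith
  nlinarith [abs_nonneg (jterm q ν y n), mul_le_mul_of_nonneg_left hr (abs_nonneg (jterm q ν y n))]

def jcoef (q ν : ℝ) (n : ℕ) : ℝ :=
  (-1 : ℝ) ^ n * q ^ (n * (n + 1)) /
    (qPochFin (q ^ (2 * ν + 2)) (q ^ 2) n * qPochFin (q ^ 2) (q ^ 2) n)

lemma jterm_eq_coef (q ν y : ℝ) (n : ℕ) :
    jterm q ν y n = jcoef q ν n * y ^ (2 * n) := by
  unfold jterm jcoef; ring

lemma jcoef_succ {q ν : ℝ} (hq : 0 < q) (hq1 : q < 1) (hν : -1 < ν) (n : ℕ) :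
    jcoef q ν (n + 1) = jcoef q ν n *
      (-(q ^ (2 * n + 2)) /
        ((1 - q ^ (2 * ν + 2) * (q ^ 2) ^ n) * (1 - q ^ 2 * (q ^ 2) ^ n))) := by
  have h := jterm_succ hq hq1 hν 1 n
  simp only [jterm_eq_coef, one_pow, mul_one] at h
  exact h

lemma key_comb {q ν lam x : ℝ} (hq : 0 < q) (hq1 : q < 1) (hν : -1 < ν) (hx : x ≠ 0)
    (n : ℕ) :
    jterm q ν (lam * (x / q)) (n + 1) - (1 + q ^ (2 * ν)) * jterm q ν (lam * x) (n + 1)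
      + q ^ (2 * ν) * jterm q ν (lam * (q * x)) (n + 1)
    = -lam ^ 2 * x ^ 2 * jterm q ν (lam * x) n := by
  obtain ⟨hf1, hf2⟩ := factor_pos hq hq1 hν (n := n) (ν := ν)
  have hAB : q ^ (2 * ν + 2) = q ^ (2 * ν) * q ^ 2 := by
    rw [Real.rpow_add hq, show (2:ℝ) = ((2:ℕ):ℝ) from by norm_num,
      Real.rpow_natCast]
  rw [hAB] at hf1
  simp only [jterm_eq_coef, jcoef_succ hq hq1 hν, hAB]
  have h1 : (1 : ℝ) - q ^ (2*ν) * q ^ 2 * (q ^ 2) ^ n ≠ 0 := hf1.ne'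
  have h2 : (1 : ℝ) - q ^ 2 * (q ^ 2) ^ n ≠ 0 := hf2.ne'
  generalize q ^ (2*ν) = a at h1 ⊢
  have hq0 : q ≠ 0 := hq.ne'
  simp only [mul_pow, div_pow]
  field_simp
  ring

lemma jnu_eq (q ν y : ℝ) : jnu q ν y = ∑' n, jterm q ν y n := rfl

lemma jterm_zero (q ν y : ℝ) : jterm q ν y 0 = 1 := by
  simp [jterm, qPochFin]

theorem q_bessel_eigenfunction (q ν lam : ℝ) (hq : 0 < q) (hq1 : q < 1) (hν : -1 < ν)
    (x : ℝ) (hx : x ≠ 0) :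
    qBesselOp q ν (fun t => jnu q ν (lam * t)) x = -lam ^ 2 * jnu q ν (lam * x) := by
  have h1 := jterm_summable hq hq1 hν (q := q) (ν := ν) (lam * (x / q))
  have h2 := jterm_summable hq hq1 hν (q := q) (ν := ν) (lam * x)
  have h3 := jterm_summable hq hq1 hν (q := q) (ν := ν) (lam * (q * x))
  have expand : qBesselOp q ν (fun t => jnu q ν (lam * t)) x =
      ((∑' n, jterm q ν (lam * (x / q)) n)
        - (1 + q ^ (2 * ν)) * (∑' n, jterm q ν (lam * x) n)
        + q ^ (2 * ν) * (∑' n, jterm q ν (lam * (q * x)) n)) / x ^ 2 := rfl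
  rw [expand, jnu_eq, ← tsum_mul_left, ← tsum_mul_left,
    ← Summable.tsum_sub h1 (h2.mul_left _),
    ← Summable.tsum_add (h1.sub (h2.mul_left _)) (h3.mul_left _)]
  set u : ℕ → ℝ := fun n => jterm q ν (lam * (x / q)) n
      - (1 + q ^ (2 * ν)) * jterm q ν (lam * x) n
      + q ^ (2 * ν) * jterm q ν (lam * (q * x)) n with hu_def
  have hu : Summable u := (h1.sub (h2.mul_left _)).add (h3.mul_left _)
  rw [Summable.tsum_eq_zero_add hu]
  have hu0 : u 0 = 0 := by
    simp only [hu_def, jterm_zero]; ring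
  have hshift : ∀ n : ℕ, u (n + 1) = -lam ^ 2 * x ^ 2 * jterm q ν (lam * x) n :=
    fun n => key_comb hq hq1 hν hx n
  rw [hu0, zero_add, tsum_congr hshift, tsum_mul_left]
  field_simp
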